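/- arXiv:1812.11798 — 8 statements merged into one kernel-verified Lean document; each statement's English description precedes it below -/
import Mathlib

section
/- Let H be a nontrivial real Hilbert space and S : H → H a bounded self-adjoint linear operator which is elliptic, i.e., there exists c > 0 such that ⟨S q, q⟩ ≥ c‖q‖² for all q ∈ H. Let 0 < α < 2/‖S‖ and g ∈ H. Then there exists a unique p ∈ H with S p = g, and for every initial guess p⁰ ∈ H the generalized Richardson iterates defined by p^{j+1} := p^j − α(S p^j − g) satisfy ‖p^j − p‖ ≤ ‖I − αS‖^j · ‖p⁰ − p‖ for all j ∈ ℕ; in particular, since ‖I − αS‖ < 1, the sequence (p^j) converges to p in H. -/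
open RealInnerProductSpace

/-- Generalized Richardson iteration: for a bounded self-adjoint elliptic operator `S` on a
nontrivial real Hilbert space and `0 < α < 2/‖S‖`, the equation `S p = g` has a unique
solution, and the Richardson iterates `p^{j+1} = p^j - α (S p^j - g)` converge to it with the
geometric rate `‖I - α S‖^j < 1`. -/
theorem stmt_1 {H : Type*} [NormedAddCommGroup H] [InnerProductSpace ℝ H] [CompleteSpace H]
    [Nontrivial H] (S : H →L[ℝ] H)
    (hsa : ∀ q r : H, ⟪S q, r⟫ = ⟪q, S r⟫)
    (c : ℝ) (hc : 0 < c) (hell : ∀ q : H, c * ‖q‖ ^ 2 ≤ ⟪S q, q⟫)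
    (α : ℝ) (hα0 : 0 < α) (hα2 : α < 2 / ‖S‖) (g : H) :
    ∃ p : H, S p = g ∧ (∀ p' : H, S p' = g → p' = p) ∧
      ‖ContinuousLinearMap.id ℝ H - α • S‖ < 1 ∧
      ∀ pseq : ℕ → H, (∀ j : ℕ, pseq (j + 1) = pseq j - α • (S (pseq j) - g)) →
        (∀ j : ℕ, ‖pseq j - p‖ ≤ ‖ContinuousLinearMap.id ℝ H - α • S‖ ^ j * ‖pseq 0 - p‖) ∧
        Filter.Tendsto pseq Filter.atTop (nhds p) := by
  set T : H →L[ℝ] H := ContinuousLinearMap.id ℝ H - α • S with hTdef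
  obtain ⟨q₀, hq₀⟩ := exists_ne (0 : H)
  have hq₀2 : 0 < ‖q₀‖ ^ 2 := pow_pos (norm_pos_iff.mpr hq₀) 2
  have hSpos : 0 < ‖S‖ := by
    have h1 := hell q₀
    have h2 : ⟪S q₀, q₀⟫ ≤ ‖S‖ * ‖q₀‖ ^ 2 := by
      calc ⟪S q₀, q₀⟫ ≤ ‖S q₀‖ * ‖q₀‖ := real_inner_le_norm _ _
        _ ≤ ‖S‖ * ‖q₀‖ * ‖q₀‖ := by gcongr; exact S.le_opNorm q₀
        _ = ‖S‖ * ‖q₀‖ ^ 2 := by ring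
    nlinarith
  have hαS : α * ‖S‖ < 2 := by
    rw [lt_div_iff₀ hSpos] at hα2; linarith
  -- key: ‖S q‖² ≤ ‖S‖ * ⟪S q, q⟫
  have key : ∀ q : H, ‖S q‖ ^ 2 ≤ ‖S‖ * ⟪S q, q⟫ := by
    intro q
    set t : ℝ := 1 / ‖S‖ with ht
    have h0 : (0:ℝ) ≤ ⟪S (q - t • S q), q - t • S q⟫ :=
      le_trans (by positivity) (hell _)
    have hsym : ⟪S (S q), q⟫ = ‖S q‖ ^ 2 := by
      rw [hsa (S q) q, real_inner_self_eq_norm_sq]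
    have hSSq : ⟪S (S q), S q⟫ ≤ ‖S‖ * ‖S q‖ ^ 2 := by
      calc ⟪S (S q), S q⟫ ≤ ‖S (S q)‖ * ‖S q‖ := real_inner_le_norm _ _
        _ ≤ ‖S‖ * ‖S q‖ * ‖S q‖ := by gcongr; exact S.le_opNorm _
        _ = ‖S‖ * ‖S q‖ ^ 2 := by ring
    have hexp : ⟪S (q - t • S q), q - t • S q⟫
        = ⟪S q, q⟫ - t * ⟪S q, S q⟫ - t * ⟪S (S q), q⟫ + t ^ 2 * ⟪S (S q), S q⟫ := by
      simp only [map_sub, map_smul, inner_sub_left, inner_sub_right,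
        real_inner_smul_left, real_inner_smul_right]
      ring
    rw [hexp, hsym, real_inner_self_eq_norm_sq] at h0
    have htS : t * ‖S‖ = 1 := by rw [ht, one_div, inv_mul_cancel₀ hSpos.ne']
    have h1 : t ^ 2 * ⟪S (S q), S q⟫ ≤ t ^ 2 * (‖S‖ * ‖S q‖ ^ 2) :=
      mul_le_mul_of_nonneg_left hSSq (sq_nonneg t)
    have h2 : t ^ 2 * (‖S‖ * ‖S q‖ ^ 2) = t * ‖S q‖ ^ 2 := by
      have : t ^ 2 * ‖S‖ = t := by nlinarith
      nlinarith
    have h3 : t * ‖S q‖ ^ 2 ≤ ⟪S q, q⟫ := by linarith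
    have h4 := mul_le_mul_of_nonneg_left h3 hSpos.le
    nlinarith
  set E : ℝ := 1 - α * c * (2 - α * ‖S‖) with hE
  have hTq : ∀ q : H, ‖T q‖ ^ 2 ≤ E * ‖q‖ ^ 2 := by
    intro q
    have h1 : T q = q - α • S q := by
      simp [hTdef, ContinuousLinearMap.sub_apply, ContinuousLinearMap.smul_apply]
    have h2 : ‖T q‖ ^ 2 = ‖q‖ ^ 2 - 2 * (α * ⟪S q, q⟫) + α ^ 2 * ‖S q‖ ^ 2 := by
      rw [h1, @norm_sub_sq_real, real_inner_smul_right, norm_smul, real_inner_comm]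
      rw [Real.norm_eq_abs, abs_of_pos hα0]
      ring
    have h3 := key q
    have h4 := hell q
    have h5 : c * ‖q‖ ^ 2 ≤ ⟪S q, q⟫ := h4
    nlinarith [sq_nonneg α, mul_pos hα0 (by linarith : (0:ℝ) < 2 - α * ‖S‖), norm_nonneg q]
  have hE0 : 0 ≤ E := by
    have := hTq q₀
    nlinarith [sq_nonneg ‖T q₀‖]
  have hE1 : E < 1 := by
    have : 0 < α * c * (2 - α * ‖S‖) := by
      apply mul_pos (mul_pos hα0 hc); linarith
    simp only [hE]; linarith
  set k : ℝ := Real.sqrt E with hk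
  have hk0 : 0 ≤ k := Real.sqrt_nonneg _
  have hk1 : k < 1 := by
    rw [hk, show (1:ℝ) = Real.sqrt 1 from (Real.sqrt_one).symm]
    exact Real.sqrt_lt_sqrt hE0 (by simpa using hE1)
  have hTle : ∀ q : H, ‖T q‖ ≤ k * ‖q‖ := by
    intro q
    have := hTq q
    nlinarith [norm_nonneg (T q), norm_nonneg q, Real.sq_sqrt hE0,
      mul_nonneg hk0 (norm_nonneg q)]
  have hTnorm : ‖T‖ < 1 := lt_of_le_of_lt (T.opNorm_le_bound hk0 hTle) hk1
  -- invert α • S using geometric series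
  have hone : (1 : H →L[ℝ] H) - T = α • S := by
    rw [hTdef, ContinuousLinearMap.one_def]; abel
  have hu : IsUnit ((1 : H →L[ℝ] H) - T) := by
    exact (Units.oneSub T hTnorm).isUnit
  rw [hone] at hu
  obtain ⟨u, huval⟩ := hu
  set p : H := (↑u⁻¹ : H →L[ℝ] H) (α • g) with hp
  have huinv : ∀ x : H, (↑u : H →L[ℝ] H) ((↑u⁻¹ : H →L[ℝ] H) x) = x := by
    intro x
    rw [← ContinuousLinearMap.mul_apply, u.mul_inv, ContinuousLinearMap.one_apply]
  have hinvu : ∀ x : H, (↑u⁻¹ : H →L[ℝ] H) ((↑u : H →L[ℝ] H) x) = x := by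
    intro x
    rw [← ContinuousLinearMap.mul_apply, u.inv_mul, ContinuousLinearMap.one_apply]
  have hSp : S p = g := by
    have h1 : (α • S) p = α • g := by
      rw [← huval]; exact huinv (α • g)
    have h2 : α • S p = α • g := by
      simpa [ContinuousLinearMap.smul_apply] using h1
    exact smul_right_injective H (ne_of_gt hα0) h2
  refine ⟨p, hSp, ?_, hTnorm, ?_⟩
  · intro p' hp'
    have h1 : (↑u : H →L[ℝ] H) p' = α • g := by
      rw [huval]; simp [ContinuousLinearMap.smul_apply, hp']
    calc p' = (↑u⁻¹ : H →L[ℝ] H) ((↑u : H →L[ℝ] H) p') := (hinvu p').symm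
      _ = p := by rw [h1]
  · intro pseq hrec
    have hstep : ∀ j : ℕ, pseq (j + 1) - p = T (pseq j - p) := by
      intro j
      rw [hrec j, hTdef]
      simp only [ContinuousLinearMap.sub_apply, ContinuousLinearMap.smul_apply,
        ContinuousLinearMap.id_apply, map_sub, ← hSp, smul_sub]
      abel
    have herr : ∀ j : ℕ, ‖pseq j - p‖ ≤ ‖T‖ ^ j * ‖pseq 0 - p‖ := by
      intro j
      induction j with
      | zero => simp
      | succ n ih =>
        calc ‖pseq (n + 1) - p‖ = ‖T (pseq n - p)‖ := by rw [hstep n]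
          _ ≤ ‖T‖ * ‖pseq n - p‖ := T.le_opNorm _
          _ ≤ ‖T‖ * (‖T‖ ^ n * ‖pseq 0 - p‖) := by
              exact mul_le_mul_of_nonneg_left ih (norm_nonneg T)
          _ = ‖T‖ ^ (n + 1) * ‖pseq 0 - p‖ := by ring
    refine ⟨herr, ?_⟩
    rw [tendsto_iff_norm_sub_tendsto_zero]
    have hlim : Filter.Tendsto (fun j : ℕ => ‖T‖ ^ j * ‖pseq 0 - p‖)
        Filter.atTop (nhds 0) := by
      have := (tendsto_pow_atTop_nhds_zero_of_lt_one (norm_nonneg T) hTnorm).mul_const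
        ‖pseq 0 - p‖
      simpa using this
    exact squeeze_zero (fun j => norm_nonneg _) herr hlim
end

section
/- Let (a_ℓ)_{ℓ∈ℕ} be a sequence of nonnegative real numbers. Then the following two statements are equivalent: (a) the series ∑ a_n converges and there exists a constant C > 0 such that ∑_{n=ℓ}^∞ a_n ≤ C·a_ℓ for all ℓ ∈ ℕ; (c) there exist constants 0 < q < 1 and C > 0 such that a_{ℓ+n} ≤ C·q^n·a_ℓ for all n, ℓ ∈ ℕ. -/
/-- For a nonnegative real sequence `(a_ℓ)`, the uniform tail-summability condition
`∑_{n=ℓ}^∞ a_n ≤ C a_ℓ` is equivalent to uniform geometric decay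
`a_{ℓ+n} ≤ C q^n a_ℓ` with some `0 < q < 1`. -/
theorem stmt_3 (a : ℕ → ℝ) (ha : ∀ ℓ : ℕ, 0 ≤ a ℓ) :
    (Summable a ∧ ∃ C : ℝ, 0 < C ∧ ∀ ℓ : ℕ, (∑' n : ℕ, a (ℓ + n)) ≤ C * a ℓ) ↔
    (∃ q C : ℝ, 0 < q ∧ q < 1 ∧ 0 < C ∧ ∀ n ℓ : ℕ, a (ℓ + n) ≤ C * q ^ n * a ℓ) := by
  constructor
  · rintro ⟨hsum, C, hC, hTail⟩
    have hsumℓ : ∀ ℓ : ℕ, Summable (fun n => a (ℓ + n)) := by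
      intro ℓ
      have := (summable_nat_add_iff ℓ).2 hsum
      exact this.congr (fun n => by rw [Nat.add_comm])
    set T : ℕ → ℝ := fun ℓ => ∑' n : ℕ, a (ℓ + n) with hT
    have hTnonneg : ∀ ℓ, 0 ≤ T ℓ := fun ℓ => tsum_nonneg (fun n => ha _)
    have hle : ∀ ℓ, a ℓ ≤ T ℓ := by
      intro ℓ
      have := Summable.le_tsum (hsumℓ ℓ) 0 (fun j _ => ha _)
      simpa using this
    have hrec : ∀ ℓ, T ℓ = a ℓ + T (ℓ + 1) := by
      intro ℓ
      have h0 := Summable.tsum_eq_zero_add (hsumℓ ℓ)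
      rw [hT]
      simp only
      rw [h0]
      congr 1
      exact tsum_congr (fun n => by congr 1; omega)
    set q : ℝ := 1 - 1 / (C + 1) with hq
    have hC1 : (0:ℝ) < C + 1 := by linarith
    have hq0 : 0 < q := by
      rw [hq]
      have : 1 / (C + 1) < 1 := by
        rw [div_lt_one hC1]; linarith
      linarith
    have hq1 : q < 1 := by
      rw [hq]
      have : 0 < 1 / (C + 1) := by positivity
      linarith
    have hstep : ∀ ℓ, T (ℓ + 1) ≤ q * T ℓ := by
      intro ℓ
      have h1 : T ℓ ≤ (C + 1) * a ℓ := le_trans (hTail ℓ) (by nlinarith [ha ℓ])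
      have h2 : T ℓ / (C + 1) ≤ a ℓ := (div_le_iff₀ hC1).2 (by linarith [h1])
      have h3 : T (ℓ + 1) = T ℓ - a ℓ := by rw [hrec ℓ]; ring
      rw [h3, hq]
      have : T ℓ / (C + 1) = (1 / (C + 1)) * T ℓ := by ring
      nlinarith [hTnonneg ℓ]
    have hiter : ∀ n ℓ, T (ℓ + n) ≤ q ^ n * T ℓ := by
      intro n
      induction n with
      | zero => intro ℓ; simp
      | succ n ih =>
        intro ℓ
        have h1 : T (ℓ + (n + 1)) = T ((ℓ + n) + 1) := by ring_nf
        have h2 := hstep (ℓ + n)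
        have h3 := ih ℓ
        calc T (ℓ + (n + 1)) = T ((ℓ + n) + 1) := h1
          _ ≤ q * T (ℓ + n) := h2
          _ ≤ q * (q ^ n * T ℓ) := by nlinarith
          _ = q ^ (n + 1) * T ℓ := by ring
    refine ⟨q, C + 1, hq0, hq1, hC1, fun n ℓ => ?_⟩
    have h1 : a (ℓ + n) ≤ T (ℓ + n) := hle _
    have h2 := hiter n ℓ
    have h3 : T ℓ ≤ (C + 1) * a ℓ := le_trans (hTail ℓ) (by nlinarith [ha ℓ])
    have hqn : (0:ℝ) ≤ q ^ n := pow_nonneg hq0.le n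
    nlinarith
  · rintro ⟨q, C, hq0, hq1, hC, h⟩
    have hgeo0 : Summable (fun n : ℕ => C * q ^ n * a 0) :=
      ((summable_geometric_of_lt_one hq0.le hq1).mul_left C).mul_right (a 0)
    have hsum : Summable a :=
      Summable.of_nonneg_of_le ha (fun n => by simpa using h n 0) hgeo0
    have h1q : (0:ℝ) < 1 - q := by linarith
    refine ⟨hsum, C / (1 - q) + 1, by positivity, fun ℓ => ?_⟩
    have hsumℓ : Summable (fun n => a (ℓ + n)) := by
      have := (summable_nat_add_iff ℓ).2 hsum
      exact this.congr (fun n => by rw [Nat.add_comm])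
    have hgeo : Summable (fun n : ℕ => C * q ^ n * a ℓ) :=
      ((summable_geometric_of_lt_one hq0.le hq1).mul_left C).mul_right _
    have h1 : (∑' n : ℕ, a (ℓ + n)) ≤ ∑' n : ℕ, C * q ^ n * a ℓ :=
      Summable.tsum_le_tsum (fun n => h n ℓ) hsumℓ hgeo
    have h2 : (∑' n : ℕ, C * q ^ n * a ℓ) = C * (1 - q)⁻¹ * a ℓ := by
      rw [show (fun n : ℕ => C * q ^ n * a ℓ) = fun n : ℕ => (C * a ℓ) * q ^ n by
        funext n; ring]
      rw [tsum_mul_left, tsum_geometric_of_lt_one hq0.le hq1]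
      ring
    have h3 : C * (1 - q)⁻¹ * a ℓ ≤ (C / (1 - q) + 1) * a ℓ := by
      have : C * (1 - q)⁻¹ = C / (1 - q) := by ring
      nlinarith [ha ℓ]
    linarith [h1, h2 ▸ h1]
end

section
/- Let (a_ℓ)_{ℓ∈ℕ} be a sequence of strictly positive real numbers. Then the following two statements are equivalent: (b) for every s > 0 there exists a constant C > 0 such that ∑_{n=0}^{ℓ} a_n^{-1/s} ≤ C·a_ℓ^{-1/s} for all ℓ ∈ ℕ; (c) there exist constants 0 < q < 1 and C > 0 such that a_{ℓ+n} ≤ C·q^n·a_ℓ for all n, ℓ ∈ ℕ. -/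
open Finset

lemma geom_bound' {r : ℝ} (h0 : 0 ≤ r) (h1 : r < 1) (n : ℕ) :
    ∑ i ∈ range n, r ^ i ≤ (1 - r)⁻¹ :=
  (Summable.sum_le_tsum (range n) (fun i _ => pow_nonneg h0 i)
    (summable_geometric_of_lt_one h0 h1)).trans_eq (tsum_geometric_of_lt_one h0 h1)

/-- For a strictly positive real sequence `(a_ℓ)`, the condition
`∑_{n=0}^{ℓ} a_n^{-1/s} ≤ C a_ℓ^{-1/s}` (for every `s > 0`) is equivalent to uniform
geometric decay `a_{ℓ+n} ≤ C q^n a_ℓ` with some `0 < q < 1`. -/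
theorem stmt_4 (a : ℕ → ℝ) (ha : ∀ ℓ : ℕ, 0 < a ℓ) :
    (∀ s : ℝ, 0 < s → ∃ C : ℝ, 0 < C ∧
        ∀ ℓ : ℕ, (∑ n ∈ Finset.range (ℓ + 1), a n ^ (-(1 / s))) ≤ C * a ℓ ^ (-(1 / s))) ↔
    (∃ q C : ℝ, 0 < q ∧ q < 1 ∧ 0 < C ∧ ∀ n ℓ : ℕ, a (ℓ + n) ≤ C * q ^ n * a ℓ) := by
  constructor
  · intro h
    obtain ⟨C, hC, hsum⟩ := h 1 one_pos
    set b : ℕ → ℝ := fun n => (a n)⁻¹ with hbdef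
    have hb : ∀ n, 0 < b n := fun n => inv_pos.2 (ha n)
    have hsum' : ∀ ℓ, ∑ n ∈ range (ℓ + 1), b n ≤ C * b ℓ := by
      intro ℓ
      simpa [Real.rpow_neg_one] using hsum ℓ
    set S : ℕ → ℝ := fun ℓ => ∑ n ∈ range (ℓ + 1), b n with hSdef
    have hS : ∀ ℓ, 0 < S ℓ := fun ℓ =>
      Finset.sum_pos (fun i _ => hb i) (by simp)
    have hSb : ∀ ℓ, b ℓ ≤ S ℓ := by
      intro ℓ
      exact Finset.single_le_sum (fun i _ => (hb i).le) (self_mem_range_succ ℓ)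
    have hC1 : 1 < C := by
      have h1 := hsum' 1
      have : b 0 + b 1 ≤ C * b 1 := by
        simpa [Finset.sum_range_succ] using h1
      nlinarith [hb 0, hb 1]
    set q : ℝ := 1 - 1 / C with hq
    have hCinv : 1 / C < 1 := by rw [div_lt_one hC]; exact hC1
    have hCinv0 : 0 < 1 / C := by positivity
    have hq0 : 0 < q := by rw [hq]; linarith
    have hq1 : q < 1 := by rw [hq]; linarith
    refine ⟨q, C, hq0, hq1, by linarith, ?_⟩
    have key : ∀ m, S m ≤ q * S (m + 1) := by
      intro m
      have h1 : S (m + 1) = S m + b (m + 1) := by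
        simp [hSdef, Finset.sum_range_succ]
      have h2 : S (m + 1) ≤ C * b (m + 1) := hsum' (m + 1)
      have hq' : q * S (m + 1) = S (m + 1) - S (m + 1) / C := by rw [hq]; ring
      rw [hq']
      have h3 : S (m + 1) / C ≤ b (m + 1) := by rw [div_le_iff₀ hC]; nlinarith
      linarith
    have key2 : ∀ n ℓ, S ℓ ≤ q ^ n * S (ℓ + n) := by
      intro n
      induction n with
      | zero => intro ℓ; simp
      | succ n ih =>
        intro ℓ
        calc S ℓ ≤ q ^ n * S (ℓ + n) := ih ℓ
          _ ≤ q ^ n * (q * S (ℓ + n + 1)) :=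
              mul_le_mul_of_nonneg_left (key _) (pow_nonneg hq0.le n)
          _ = q ^ (n + 1) * S (ℓ + (n + 1)) := by ring_nf
    intro n ℓ
    have hbb : b ℓ ≤ C * q ^ n * b (ℓ + n) := by
      calc b ℓ ≤ S ℓ := hSb ℓ
        _ ≤ q ^ n * S (ℓ + n) := key2 n ℓ
        _ ≤ q ^ n * (C * b (ℓ + n)) :=
            mul_le_mul_of_nonneg_left (hsum' _) (pow_nonneg hq0.le n)
        _ = C * q ^ n * b (ℓ + n) := by ring
    have h1 := ha ℓ
    have h2 := ha (ℓ + n)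
    rw [hbdef] at hbb
    simp only at hbb
    rw [inv_le_iff_one_le_mul₀ h1] at hbb
    have hne : a (ℓ + n) ≠ 0 := h2.ne'
    calc a (ℓ + n) = 1 * a (ℓ + n) := (one_mul _).symm
      _ ≤ (C * q ^ n * (a (ℓ + n))⁻¹ * a ℓ) * a (ℓ + n) :=
          mul_le_mul_of_nonneg_right hbb h2.le
      _ = C * q ^ n * a ℓ := by field_simp
  · rintro ⟨q, C, hq0, hq1, hC, hgeo⟩
    intro s hs
    have hs' : 0 < 1 / s := by positivity
    set r : ℝ := q ^ (1 / s : ℝ) with hr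
    have hr0 : 0 < r := Real.rpow_pos_of_pos hq0 _
    have hr1 : r < 1 := Real.rpow_lt_one hq0.le hq1 hs'
    have h1r : 0 < 1 - r := by linarith
    have hCpos : (0:ℝ) < C ^ (1 / s : ℝ) := Real.rpow_pos_of_pos hC _
    refine ⟨C ^ (1 / s : ℝ) * (1 - r)⁻¹, mul_pos hCpos (inv_pos.2 h1r), ?_⟩
    intro ℓ
    have hterm : ∀ n ∈ range (ℓ + 1),
        a n ^ (-(1 / s) : ℝ) ≤ C ^ (1 / s : ℝ) * r ^ (ℓ - n) * a ℓ ^ (-(1 / s) : ℝ) := by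
      intro n hn
      have hnℓ : n ≤ ℓ := Nat.lt_succ_iff.1 (mem_range.1 hn)
      have hle : a ℓ ≤ C * q ^ (ℓ - n) * a n := by
        have := hgeo (ℓ - n) n
        rwa [Nat.add_sub_cancel' hnℓ] at this
      have hinv : (a n)⁻¹ ≤ C * q ^ (ℓ - n) * (a ℓ)⁻¹ := by
        have h' : 1 ≤ (C * q ^ (ℓ - n) * a n) / a ℓ := (one_le_div (ha ℓ)).2 hle
        rw [div_eq_mul_inv] at h'
        rw [inv_le_iff_one_le_mul₀ (ha n)]
        calc (1:ℝ) ≤ C * q ^ (ℓ - n) * a n * (a ℓ)⁻¹ := h'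
          _ = C * q ^ (ℓ - n) * (a ℓ)⁻¹ * a n := by ring
      have e1 : ∀ m : ℕ, a m ^ (-(1 / s) : ℝ) = ((a m)⁻¹) ^ (1 / s : ℝ) := by
        intro m
        rw [Real.rpow_neg (ha m).le, ← Real.inv_rpow (ha m).le]
      rw [e1, e1]
      calc ((a n)⁻¹) ^ (1 / s : ℝ) ≤ (C * q ^ (ℓ - n) * (a ℓ)⁻¹) ^ (1 / s : ℝ) :=
            Real.rpow_le_rpow (inv_pos.2 (ha n)).le hinv hs'.le
        _ = C ^ (1 / s : ℝ) * r ^ (ℓ - n) * ((a ℓ)⁻¹) ^ (1 / s : ℝ) := by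
            rw [Real.mul_rpow (mul_pos hC (pow_pos hq0 _)).le (inv_pos.2 (ha ℓ)).le,
                Real.mul_rpow hC.le (pow_pos hq0 _).le,
                ← Real.rpow_natCast q (ℓ - n), ← Real.rpow_mul hq0.le,
                mul_comm ((ℓ - n : ℕ) : ℝ), Real.rpow_mul hq0.le,
                Real.rpow_natCast]
    calc ∑ n ∈ range (ℓ + 1), a n ^ (-(1 / s) : ℝ)
        ≤ ∑ n ∈ range (ℓ + 1), C ^ (1 / s : ℝ) * r ^ (ℓ - n) * a ℓ ^ (-(1 / s) : ℝ) :=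
          Finset.sum_le_sum hterm
      _ = C ^ (1 / s : ℝ) * a ℓ ^ (-(1 / s) : ℝ) * ∑ n ∈ range (ℓ + 1), r ^ (ℓ - n) := by
          rw [Finset.mul_sum]; apply Finset.sum_congr rfl; intros; ring
      _ = C ^ (1 / s : ℝ) * a ℓ ^ (-(1 / s) : ℝ) * ∑ k ∈ range (ℓ + 1), r ^ k := by
          congr 1
          rw [← Finset.sum_range_reflect]
          apply Finset.sum_congr rfl
          intro i hi
          rw [Finset.mem_range] at hi
          congr 1
          omega
      _ ≤ C ^ (1 / s : ℝ) * a ℓ ^ (-(1 / s) : ℝ) * (1 - r)⁻¹ :=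
          mul_le_mul_of_nonneg_left (geom_bound' hr0.le hr1 _)
            (mul_nonneg hCpos.le (Real.rpow_nonneg (ha ℓ).le _))
      _ = C ^ (1 / s : ℝ) * (1 - r)⁻¹ * a ℓ ^ (-(1 / s) : ℝ) := by ring
end

section
/- Let ι be a type, n : ι → ℕ, and ρ : ι → ℝ with ρ(i) ≥ 0 for all i. Assume: (i) there exists i₀ ∈ ι with n(i₀) = 0; (ii) for every N ∈ ℕ the set {i ∈ ι : n(i) ≤ N} is finite; (iii) inf_{i ∈ ι} ρ(i) = 0, i.e., for every ε > 0 there exists i ∈ ι with ρ(i) ≤ ε. Fix s > 0. Then, as an identity in [0, ∞], sup_{N ∈ ℕ} ( (N+1)^s · min{ ρ(i) : n(i) ≤ N } ) = sup_{ε > 0} ( ε · min{ n(i)^s : ρ(i) ≤ ε } ), where both minima are attained (the first over a nonempty finite set, the second because n takes values in ℕ over a nonempty set). -/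
open scoped ENNReal

lemma sup_Ioo_ofReal (m : ℝ) (hm : 0 < m) :
    (⨆ ε ∈ Set.Ioo (0 : ℝ) m, ENNReal.ofReal ε) = ENNReal.ofReal m := by
  apply le_antisymm
  · exact iSup₂_le fun ε hε => ENNReal.ofReal_le_ofReal hε.2.le
  · refine ENNReal.le_of_forall_pos_le_add fun δ hδ _ => ?_
    set d : ℝ := min (m / 2) δ with hd
    have hd0 : 0 < d := lt_min (by linarith) (by exact_mod_cast hδ)
    have hmem : m - d ∈ Set.Ioo (0 : ℝ) m := by
      constructor
      · have : d ≤ m / 2 := min_le_left _ _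
        linarith
      · linarith
    calc ENNReal.ofReal m = ENNReal.ofReal ((m - d) + d) := by ring_nf
      _ ≤ ENNReal.ofReal (m - d) + ENNReal.ofReal d := ENNReal.ofReal_add_le
      _ ≤ (⨆ ε ∈ Set.Ioo (0 : ℝ) m, ENNReal.ofReal ε) + δ := by
          gcongr
          · exact le_iSup₂ (f := fun ε (_ : ε ∈ Set.Ioo (0:ℝ) m) => ENNReal.ofReal ε)
              (m - d) hmem
          · calc ENNReal.ofReal d ≤ ENNReal.ofReal δ :=
                  ENNReal.ofReal_le_ofReal (min_le_right _ _)
              _ = δ := ENNReal.ofReal_coe_nnreal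

/-- Equality of the two definitions of approximation classes: the accuracy-based and the
cardinality-based approximation norms coincide (as an identity in `[0,∞]`). -/
theorem stmt_5 {ι : Type*} (n : ι → ℕ) (ρ : ι → ℝ) (hρ : ∀ i, 0 ≤ ρ i)
    (hinit : ∃ i₀, n i₀ = 0) (hfin : ∀ N : ℕ, {i | n i ≤ N}.Finite)
    (hinf : ∀ ε : ℝ, 0 < ε → ∃ i, ρ i ≤ ε) (s : ℝ) (hs : 0 < s) :
    (⨆ N : ℕ, ENNReal.ofReal ((N + 1 : ℝ) ^ s) *
        ⨅ i ∈ {i | n i ≤ N}, ENNReal.ofReal (ρ i)) =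
    ⨆ ε ∈ Set.Ioi (0 : ℝ), ENNReal.ofReal ε *
        ⨅ i ∈ {i | ρ i ≤ ε}, ENNReal.ofReal ((n i : ℝ) ^ s) := by
  obtain ⟨i₀, hi₀⟩ := hinit
  apply le_antisymm
  · -- LHS ≤ RHS
    refine iSup_le fun N => ?_
    -- the min over the finite nonempty set is attained
    obtain ⟨i₁, hi₁mem, hi₁min⟩ := Set.exists_min_image {i | n i ≤ N} ρ (hfin N)
      ⟨i₀, by simp [hi₀]⟩
    have hinf_eq : (⨅ i ∈ {i | n i ≤ N}, ENNReal.ofReal (ρ i)) =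
        ENNReal.ofReal (ρ i₁) := by
      apply le_antisymm
      · exact biInf_le _ hi₁mem
      · exact le_iInf₂ fun i hi => ENNReal.ofReal_le_ofReal (hi₁min i hi)
    rw [hinf_eq]
    rcases eq_or_lt_of_le (hρ i₁) with hm | hm
    · simp [← hm]
    · rw [← sup_Ioo_ofReal (ρ i₁) hm]
      simp only [ENNReal.mul_iSup]
      refine iSup₂_le fun ε hε => ?_
      refine le_trans ?_ (le_iSup₂ (f := fun ε (_ : ε ∈ Set.Ioi (0:ℝ)) =>
        ENNReal.ofReal ε * ⨅ i ∈ {i | ρ i ≤ ε}, ENNReal.ofReal ((n i : ℝ) ^ s)) ε hε.1)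
      rw [mul_comm]
      gcongr
      refine le_iInf₂ fun i hi => ?_
      have hni : (N : ℝ) + 1 ≤ (n i : ℝ) := by
        have h1 : ¬ n i ≤ N := by
          intro hle
          exact absurd hi (not_le.mpr (lt_of_lt_of_le hε.2 (hi₁min i hle)))
        have : N + 1 ≤ n i := Nat.succ_le_of_lt (not_le.mp h1)
        exact_mod_cast this
      exact ENNReal.ofReal_le_ofReal
        (Real.rpow_le_rpow (by positivity) hni hs.le)
  · -- RHS ≤ LHS
    refine iSup₂_le fun ε hε => ?_
    have hε0 : (0 : ℝ) < ε := hε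
    obtain ⟨j, hjρ⟩ := hinf ε hε0
    set S : Set ℕ := n '' {i | ρ i ≤ ε} with hS
    have hSne : S.Nonempty := ⟨n j, j, hjρ, rfl⟩
    have hkmem : sInf S ∈ S := Nat.sInf_mem hSne
    obtain ⟨i₁, hi₁ρ, hi₁n⟩ := hkmem
    set k : ℕ := sInf S with hk
    have hub : (⨅ i ∈ {i | ρ i ≤ ε}, ENNReal.ofReal ((n i : ℝ) ^ s)) ≤
        ENNReal.ofReal ((k : ℝ) ^ s) := by
      rw [← hi₁n]; exact biInf_le _ hi₁ρ
    refine le_trans (mul_le_mul_right hub _) ?_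
    rcases Nat.eq_zero_or_pos k with hk0 | hkpos
    · simp [hk0, Real.zero_rpow hs.ne']
    · obtain ⟨N, hN⟩ : ∃ N, k = N + 1 := ⟨k - 1, (Nat.succ_pred_eq_of_pos hkpos).symm⟩
      rw [hN]
      refine le_trans ?_ (le_iSup (fun N : ℕ => ENNReal.ofReal ((N + 1 : ℝ) ^ s) *
        ⨅ i ∈ {i | n i ≤ N}, ENNReal.ofReal (ρ i)) N)
      rw [mul_comm]
      have hcast : ((N : ℝ) + 1) = ((N + 1 : ℕ) : ℝ) := by push_cast; ring
      rw [hcast]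
      gcongr
      refine le_iInf₂ fun i hi => ?_
      apply ENNReal.ofReal_le_ofReal
      by_contra hlt
      push_neg at hlt
      have hiS : n i ∈ S := ⟨i, hlt.le, rfl⟩
      have : N + 1 ≤ n i := hN ▸ Nat.sInf_le hiS
      exact absurd hi (not_le.mpr (Nat.lt_of_succ_le this))
end

section
/- Let H be a real Hilbert space, S : H → H a bounded self-adjoint linear operator, and C ≥ 1 a constant such that C^{-2}·‖q‖² ≤ ⟨S q, q⟩ ≤ ‖q‖² for all q ∈ H. Let K ⊆ H be a closed linear subspace and Π : H → H the orthogonal projection onto K. Then for every e ∈ K there holds the chain of inequalities ‖Π(S e)‖² ≤ ‖S e‖² ≤ ⟨S e, e⟩ ≤ C²·‖Π(S e)‖². -/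
open RealInnerProductSpace

/-- Let `S` be bounded self-adjoint with `C⁻² ‖q‖² ≤ ⟨S q, q⟩ ≤ ‖q‖²`, and let `Proj` be the
orthogonal projection onto a closed subspace `K` (characterized by: `Proj` maps into `K`,
restricts to the identity on `K`, and is self-adjoint). Then for every `e ∈ K`:
`‖Proj(S e)‖² ≤ ‖S e‖² ≤ ⟨S e, e⟩ ≤ C² ‖Proj(S e)‖²`. -/
theorem stmt_7 {H : Type*} [NormedAddCommGroup H] [InnerProductSpace ℝ H] [CompleteSpace H]
    (S : H →L[ℝ] H) (hsa : ∀ q r : H, ⟪S q, r⟫ = ⟪q, S r⟫)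
    (C : ℝ) (hC : 1 ≤ C)
    (hlow : ∀ q : H, (C ^ 2)⁻¹ * ‖q‖ ^ 2 ≤ ⟪S q, q⟫)
    (hup : ∀ q : H, ⟪S q, q⟫ ≤ ‖q‖ ^ 2)
    (K : Submodule ℝ H) (hK : IsClosed (K : Set H))
    (Proj : H →L[ℝ] H) (hProjmem : ∀ x : H, Proj x ∈ K)
    (hProjid : ∀ e ∈ K, Proj e = e)
    (hProjsa : ∀ x y : H, ⟪Proj x, y⟫ = ⟪x, Proj y⟫) :
    ∀ e ∈ K, ‖Proj (S e)‖ ^ 2 ≤ ‖S e‖ ^ 2 ∧ ‖S e‖ ^ 2 ≤ ⟪S e, e⟫ ∧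
      ⟪S e, e⟫ ≤ C ^ 2 * ‖Proj (S e)‖ ^ 2 := by
  intro e he
  have hCpos : (0:ℝ) < C := lt_of_lt_of_le one_pos hC
  have hpos : ∀ q : H, 0 ≤ ⟪S q, q⟫ := fun q =>
    le_trans (by positivity) (hlow q)
  -- abbreviations
  set v := S e with hv
  -- Part 1 : ‖Proj v‖² ≤ ‖v‖²
  have hPP : ⟪Proj v, Proj v⟫ = ⟪v, Proj v⟫ := by
    rw [hProjsa, hProjid _ (hProjmem v)]
  have hP1 : ‖Proj v‖ ^ 2 ≤ ‖v‖ * ‖Proj v‖ := by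
    have := real_inner_le_norm v (Proj v)
    rw [← hPP, real_inner_self_eq_norm_sq] at this
    linarith
  have part1 : ‖Proj v‖ ^ 2 ≤ ‖v‖ ^ 2 := by
    nlinarith [sq_nonneg (‖v‖ - ‖Proj v‖), norm_nonneg (Proj v), norm_nonneg v]
  -- Part 2 : ‖S e‖² ≤ ⟪S e, e⟫
  have h1 := hpos (e - S e)
  have h2 := hup (S e)
  have hEq : ⟪S (S e), e⟫ = ⟪S e, S e⟫ := hsa (S e) e
  rw [map_sub, inner_sub_left, inner_sub_right, inner_sub_right] at h1
  have part2 : ‖S e‖ ^ 2 ≤ ⟪S e, e⟫ := by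
    have : ⟪S e, S e⟫ = ‖S e‖ ^ 2 := real_inner_self_eq_norm_sq (S e)
    linarith
  -- Part 3 : ⟪S e, e⟫ ≤ C² ‖Proj (S e)‖²
  have hPe : ⟪S e, e⟫ = ⟪Proj (S e), e⟫ := by
    rw [hProjsa, hProjid _ he]
  have hcs : ⟪S e, e⟫ ≤ ‖Proj (S e)‖ * ‖e‖ := by
    rw [hPe]; exact real_inner_le_norm _ _
  have hl : (C ^ 2)⁻¹ * ‖e‖ ^ 2 ≤ ⟪S e, e⟫ := hlow e
  have hl' : ‖e‖ ^ 2 ≤ C ^ 2 * ⟪S e, e⟫ := by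
    rw [inv_mul_le_iff₀ (by positivity)] at hl
    linarith [hl]
  have hs : (0:ℝ) ≤ ⟪S e, e⟫ := hpos e
  have h6 : ⟪S e, e⟫ * ⟪S e, e⟫ ≤ (‖Proj (S e)‖ * ‖e‖) * (‖Proj (S e)‖ * ‖e‖) :=
    mul_self_le_mul_self hs hcs
  have h7 : ‖Proj (S e)‖ ^ 2 * ‖e‖ ^ 2 ≤ ‖Proj (S e)‖ ^ 2 * (C ^ 2 * ⟪S e, e⟫) :=
    mul_le_mul_of_nonneg_left hl' (by positivity)
  have part3 : ⟪S e, e⟫ ≤ C ^ 2 * ‖Proj (S e)‖ ^ 2 := by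
    nlinarith [hs, h6, h7, sq_nonneg (C * ‖Proj (S e)‖)]
  exact ⟨part1, part2, part3⟩
end

section
/- Let H be a real Hilbert space and S : H → H a bounded self-adjoint linear operator with operator norm ‖S‖ ≤ 1 and satisfying the ellipticity bound ⟨S q, q⟩ ≥ c·‖q‖² for all q ∈ H, where 0 < c ≤ 1. Let K ⊆ H be a closed linear subspace and Π : H → H the orthogonal projection onto K. Then the discretized Uzawa update is a uniform contraction on K: for every e ∈ K, ‖e − Π(S e)‖ ≤ (1 − c)·‖e‖. -/
open RealInnerProductSpace

/-- Contraction of the discretized Uzawa update: if `S` is bounded self-adjoint with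
`‖S‖ ≤ 1` and `⟨S q, q⟩ ≥ c ‖q‖²` with `0 < c ≤ 1`, and `Proj` is the orthogonal projection
onto a closed subspace `K`, then `‖e − Proj(S e)‖ ≤ (1 − c) ‖e‖` for every `e ∈ K`. -/
theorem stmt_8 {H : Type*} [NormedAddCommGroup H] [InnerProductSpace ℝ H] [CompleteSpace H]
    (S : H →L[ℝ] H) (hsa : ∀ q r : H, ⟪S q, r⟫ = ⟪q, S r⟫)
    (hSnorm : ‖S‖ ≤ 1)
    (c : ℝ) (hc0 : 0 < c) (hc1 : c ≤ 1)
    (hell : ∀ q : H, c * ‖q‖ ^ 2 ≤ ⟪S q, q⟫)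
    (K : Submodule ℝ H) (hK : IsClosed (K : Set H))
    (Proj : H →L[ℝ] H) (hProjmem : ∀ x : H, Proj x ∈ K)
    (hProjid : ∀ e ∈ K, Proj e = e)
    (hProjsa : ∀ x y : H, ⟪Proj x, y⟫ = ⟪x, Proj y⟫) :
    ∀ e ∈ K, ‖e - Proj (S e)‖ ≤ (1 - c) * ‖e‖ := by
  intro e he
  set A : H →L[ℝ] H := ContinuousLinearMap.id ℝ H - S with hA
  have hAapp : ∀ x : H, A x = x - S x := fun x => rfl
  have hBsymm : ∀ x y : H, ⟪A x, y⟫ = ⟪A y, x⟫ := by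
    intro x y
    rw [hAapp, hAapp, inner_sub_left, inner_sub_left, hsa,
      real_inner_comm x y, real_inner_comm x (S y)]
  have hB0 : ∀ x : H, 0 ≤ ⟪A x, x⟫ := by
    intro x
    rw [hAapp, inner_sub_left, real_inner_self_eq_norm_sq]
    have h1 : ⟪S x, x⟫ ≤ ‖x‖ * ‖x‖ := by
      calc ⟪S x, x⟫ ≤ ‖S x‖ * ‖x‖ := real_inner_le_norm _ _
        _ ≤ (‖S‖ * ‖x‖) * ‖x‖ := by
            gcongr; exact S.le_opNorm x
        _ ≤ (1 * ‖x‖) * ‖x‖ := by gcongr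
        _ = ‖x‖ * ‖x‖ := by ring
    nlinarith
  have hB1 : ∀ x : H, ⟪A x, x⟫ ≤ (1 - c) * ‖x‖ ^ 2 := by
    intro x
    rw [hAapp, inner_sub_left, real_inner_self_eq_norm_sq]
    have := hell x
    nlinarith [sq_nonneg ‖x‖]
  -- Cauchy-Schwarz for the nonnegative symmetric bilinear form ⟪A·,·⟫
  have hCS : ∀ x y : H, ⟪A x, y⟫ ^ 2 ≤ ⟪A x, x⟫ * ⟪A y, y⟫ := by
    intro x y
    have hquad : ∀ t : ℝ,
        0 ≤ ⟪A x, x⟫ * (t * t) + (2 * ⟪A x, y⟫) * t + ⟪A y, y⟫ := by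
      intro t
      have h := hB0 (t • x + y)
      have hexp : ⟪A (t • x + y), t • x + y⟫
          = ⟪A x, x⟫ * (t * t) + (2 * ⟪A x, y⟫) * t + ⟪A y, y⟫ := by
        have hxy : ⟪A y, x⟫ = ⟪A x, y⟫ := hBsymm y x
        simp only [map_add, map_smul, inner_add_left, inner_add_right,
          real_inner_smul_left, real_inner_smul_right]
        rw [hxy]; ring
      linarith [hexp ▸ h]
    have hd := discrim_le_zero hquad
    rw [discrim] at hd
    nlinarith [hd]
  -- ‖A x‖ ≤ (1 - c) * ‖x‖
  have hAnorm : ∀ x : H, ‖A x‖ ≤ (1 - c) * ‖x‖ := by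
    intro x
    rcases eq_or_ne (A x) 0 with h0 | h0
    · rw [h0, norm_zero]
      have := norm_nonneg x
      nlinarith
    · have hAx : (0:ℝ) < ‖A x‖ := norm_pos_iff.mpr h0
      have key := hCS x (A x)
      have h1 : ⟪A x, A x⟫ = ‖A x‖ ^ 2 := real_inner_self_eq_norm_sq _
      have h2 := hB1 x
      have h3 := hB1 (A x)
      have h4 := hB0 x
      have hc1' : (0:ℝ) ≤ 1 - c := by linarith
      -- key : (‖A x‖^2)^2 ≤ ⟪A x, x⟫ * ⟪A(Ax), Ax⟫ ≤ (1-c)‖x‖² (1-c)‖Ax‖²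
      have h5 : ‖A x‖ ^ 4 ≤ ((1 - c) * ‖x‖ ^ 2) * ((1 - c) * ‖A x‖ ^ 2) := by
        have := mul_le_mul h2 h3 (hB0 (A x)) (by nlinarith [norm_nonneg x] : (0:ℝ) ≤ (1-c) * ‖x‖^2)
        nlinarith [key]
      have h6 : ‖A x‖ ^ 2 ≤ ((1 - c) * ‖x‖) ^ 2 := by
        have hpos : (0:ℝ) < ‖A x‖ ^ 2 := by positivity
        nlinarith
      nlinarith [norm_nonneg (A x), norm_nonneg x, h6,
        mul_nonneg hc1' (norm_nonneg x)]
  -- Proj is a contraction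
  have hProjle : ∀ x : H, ‖Proj x‖ ≤ ‖x‖ := by
    intro x
    rcases eq_or_ne (Proj x) 0 with h0 | h0
    · rw [h0, norm_zero]; exact norm_nonneg x
    · have hp : (0:ℝ) < ‖Proj x‖ := norm_pos_iff.mpr h0
      have h1 : ‖Proj x‖ ^ 2 = ⟪x, Proj x⟫ := by
        rw [← real_inner_self_eq_norm_sq, hProjsa, hProjid _ (hProjmem x)]
      have h2 : ⟪x, Proj x⟫ ≤ ‖x‖ * ‖Proj x‖ := real_inner_le_norm _ _
      nlinarith
  have heq : e - Proj (S e) = Proj (A e) := by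
    rw [hAapp, map_sub, hProjid e he]
  rw [heq]
  calc ‖Proj (A e)‖ ≤ ‖A e‖ := hProjle _
    _ ≤ (1 - c) * ‖e‖ := hAnorm e
end

section
/- Let ι be a type, n : ι → ℕ with: (i) there exists i₀ ∈ ι with n(i₀) = 0, and (ii) for every N ∈ ℕ the set {i ∈ ι : n(i) ≤ N} is finite. Let o : ι → ι → ι be a binary overlay operation satisfying n(o(i,j)) ≤ n(i) + n(j) for all i, j ∈ ι. Let ρ₁, ρ₂, ρ₃ : ι → ℝ be nonnegative functions that are each monotone under overlay, i.e., ρ_k(o(i,j)) ≤ ρ_k(i) and ρ_k(o(i,j)) ≤ ρ_k(j) for all i, j ∈ ι and k ∈ {1,2,3}. For a nonnegative function ρ : ι → ℝ and s > 0, define A_s(ρ) := sup_{N∈ℕ} ( (N+1)^s · min{ρ(i) : n(i) ≤ N} ) in [0,∞]. Then for every s > 0: (1/3)·(A_s(ρ₁) + A_s(ρ₂) + A_s(ρ₃)) ≤ A_s(ρ₁ + ρ₂ + ρ₃) ≤ 3^s·(A_s(ρ₁) + A_s(ρ₂) + A_s(ρ₃)). -/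
open scoped ENNReal

/-- The approximation norm of rate `s > 0` of a nonnegative error quantity `ρ` with respect
to a size function `n : ι → ℕ`, as a value in `[0,∞]`. -/
noncomputable def apxNorm {ι : Type*} (n : ι → ℕ) (ρ : ι → ℝ) (s : ℝ) : ℝ≥0∞ :=
  ⨆ N : ℕ, ENNReal.ofReal ((N + 1 : ℝ) ^ s) * ⨅ i ∈ {i | n i ≤ N}, ENNReal.ofReal (ρ i)

/-- Equivalence of the approximation norm of the total error `ρ₁ + ρ₂ + ρ₃` with the sum of
the three individual approximation norms, for error quantities monotone under overlay. -/
theorem stmt_9 {ι : Type*} (n : ι → ℕ)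
    (hinit : ∃ i₀, n i₀ = 0) (hfin : ∀ N : ℕ, {i | n i ≤ N}.Finite)
    (o : ι → ι → ι) (hover : ∀ i j, n (o i j) ≤ n i + n j)
    (ρ₁ ρ₂ ρ₃ : ι → ℝ)
    (hρ₁ : ∀ i, 0 ≤ ρ₁ i) (hρ₂ : ∀ i, 0 ≤ ρ₂ i) (hρ₃ : ∀ i, 0 ≤ ρ₃ i)
    (hmono₁ : ∀ i j, ρ₁ (o i j) ≤ ρ₁ i ∧ ρ₁ (o i j) ≤ ρ₁ j)
    (hmono₂ : ∀ i j, ρ₂ (o i j) ≤ ρ₂ i ∧ ρ₂ (o i j) ≤ ρ₂ j)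
    (hmono₃ : ∀ i j, ρ₃ (o i j) ≤ ρ₃ i ∧ ρ₃ (o i j) ≤ ρ₃ j)
    (s : ℝ) (hs : 0 < s) :
    (1 / 3 : ℝ≥0∞) * (apxNorm n ρ₁ s + apxNorm n ρ₂ s + apxNorm n ρ₃ s) ≤
        apxNorm n (fun i => ρ₁ i + ρ₂ i + ρ₃ i) s ∧
      apxNorm n (fun i => ρ₁ i + ρ₂ i + ρ₃ i) s ≤
        ENNReal.ofReal ((3 : ℝ) ^ s) * (apxNorm n ρ₁ s + apxNorm n ρ₂ s + apxNorm n ρ₃ s) := by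
  classical
  obtain ⟨i₀, hi₀⟩ := hinit
  have hne : ∀ K : ℕ, ({i | n i ≤ K}).Nonempty := fun K => ⟨i₀, by simp [hi₀]⟩
  set F : ι → ℝ := fun i => ρ₁ i + ρ₂ i + ρ₃ i with hF
  have key : ∀ ρ : ι → ℝ, (∀ i, ρ i ≤ F i) → apxNorm n ρ s ≤ apxNorm n F s := by
    intro ρ hρ
    refine iSup_mono fun N => ?_
    gcongr with i hi
    exact hρ i
  constructor
  · have h1 : apxNorm n ρ₁ s ≤ apxNorm n F s :=
      key ρ₁ fun i => by have := hρ₂ i; have := hρ₃ i; simp [hF]; linarith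
    have h2 : apxNorm n ρ₂ s ≤ apxNorm n F s :=
      key ρ₂ fun i => by have := hρ₁ i; have := hρ₃ i; simp [hF]; linarith
    have h3 : apxNorm n ρ₃ s ≤ apxNorm n F s :=
      key ρ₃ fun i => by have := hρ₁ i; have := hρ₂ i; simp [hF]; linarith
    calc (1 / 3 : ℝ≥0∞) * (apxNorm n ρ₁ s + apxNorm n ρ₂ s + apxNorm n ρ₃ s)
        ≤ (1 / 3 : ℝ≥0∞) * (apxNorm n F s + apxNorm n F s + apxNorm n F s) := by gcongr
      _ = (1 / 3 : ℝ≥0∞) * 3 * apxNorm n F s := by ring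
      _ = apxNorm n F s := by
          rw [one_div, ENNReal.inv_mul_cancel (by norm_num) (by norm_num), one_mul]
  · refine iSup_le fun N => ?_
    set M := N / 3 with hM
    obtain ⟨i₁, hi₁, hmin₁⟩ := Set.exists_min_image _ ρ₁ (hfin M) (hne M)
    obtain ⟨i₂, hi₂, hmin₂⟩ := Set.exists_min_image _ ρ₂ (hfin M) (hne M)
    obtain ⟨i₃, hi₃, hmin₃⟩ := Set.exists_min_image _ ρ₃ (hfin M) (hne M)
    simp only [Set.mem_setOf_eq] at hi₁ hi₂ hi₃
    set j := o (o i₁ i₂) i₃ with hj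
    have hnj : n j ≤ N := by
      have h12 := hover i₁ i₂
      have h123 := hover (o i₁ i₂) i₃
      rw [hj]
      omega
    have hρj : F j ≤ ρ₁ i₁ + ρ₂ i₂ + ρ₃ i₃ := by
      have h1 : ρ₁ j ≤ ρ₁ i₁ := le_trans (hmono₁ (o i₁ i₂) i₃).1 (hmono₁ i₁ i₂).1
      have h2 : ρ₂ j ≤ ρ₂ i₂ := le_trans (hmono₂ (o i₁ i₂) i₃).1 (hmono₂ i₁ i₂).2
      have h3 : ρ₃ j ≤ ρ₃ i₃ := (hmono₃ (o i₁ i₂) i₃).2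
      simp only [hF]; linarith
    have hinf : (⨅ i ∈ {i | n i ≤ N}, ENNReal.ofReal (F i)) ≤ ENNReal.ofReal (F j) :=
      biInf_le _ hnj
    have hsplit : ENNReal.ofReal (F j)
        ≤ ENNReal.ofReal (ρ₁ i₁) + ENNReal.ofReal (ρ₂ i₂) + ENNReal.ofReal (ρ₃ i₃) := by
      calc ENNReal.ofReal (F j) ≤ ENNReal.ofReal (ρ₁ i₁ + ρ₂ i₂ + ρ₃ i₃) :=
            ENNReal.ofReal_le_ofReal hρj
        _ = _ := by
            rw [ENNReal.ofReal_add (by have := hρ₁ i₁; have := hρ₂ i₂; linarith) (hρ₃ i₃),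
              ENNReal.ofReal_add (hρ₁ i₁) (hρ₂ i₂)]
    have hpow : ((N : ℝ) + 1) ^ s ≤ (3 : ℝ) ^ s * ((M : ℝ) + 1) ^ s := by
      rw [← Real.mul_rpow (by norm_num) (by positivity)]
      apply Real.rpow_le_rpow (by positivity) _ hs.le
      have h : N + 1 ≤ 3 * (M + 1) := by omega
      have h' : ((N + 1 : ℕ) : ℝ) ≤ ((3 * (M + 1) : ℕ) : ℝ) := Nat.cast_le.2 h
      push_cast at h'
      linarith
    have hE : ∀ (ρ : ι → ℝ) (ik : ι), (∀ b ∈ {i | n i ≤ M}, ρ ik ≤ ρ b) →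
        ENNReal.ofReal (ρ ik) ≤ ⨅ i ∈ {i | n i ≤ M}, ENNReal.ofReal (ρ i) := by
      intro ρ ik hik
      exact le_iInf₂ fun i hi => ENNReal.ofReal_le_ofReal (hik i hi)
    have hA : ∀ (ρ : ι → ℝ),
        ENNReal.ofReal (((M : ℝ) + 1) ^ s) * (⨅ i ∈ {i | n i ≤ M}, ENNReal.ofReal (ρ i))
          ≤ apxNorm n ρ s := fun ρ => le_iSup
            (fun K : ℕ => ENNReal.ofReal ((K + 1 : ℝ) ^ s) * ⨅ i ∈ {i | n i ≤ K}, ENNReal.ofReal (ρ i)) M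
    calc ENNReal.ofReal ((N + 1 : ℝ) ^ s) * ⨅ i ∈ {i | n i ≤ N}, ENNReal.ofReal (F i)
        ≤ (ENNReal.ofReal ((3 : ℝ) ^ s) * ENNReal.ofReal (((M : ℝ) + 1) ^ s)) *
            (ENNReal.ofReal (ρ₁ i₁) + ENNReal.ofReal (ρ₂ i₂) + ENNReal.ofReal (ρ₃ i₃)) := by
          rw [← ENNReal.ofReal_mul (by positivity)]
          exact mul_le_mul' (ENNReal.ofReal_le_ofReal hpow) (le_trans hinf hsplit)
      _ ≤ (ENNReal.ofReal ((3 : ℝ) ^ s) * ENNReal.ofReal (((M : ℝ) + 1) ^ s)) *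
            ((⨅ i ∈ {i | n i ≤ M}, ENNReal.ofReal (ρ₁ i)) +
             (⨅ i ∈ {i | n i ≤ M}, ENNReal.ofReal (ρ₂ i)) +
             (⨅ i ∈ {i | n i ≤ M}, ENNReal.ofReal (ρ₃ i))) := by
          gcongr
          · exact hE ρ₁ i₁ hmin₁
          · exact hE ρ₂ i₂ hmin₂
          · exact hE ρ₃ i₃ hmin₃
      _ = ENNReal.ofReal ((3 : ℝ) ^ s) *
            (ENNReal.ofReal (((M : ℝ) + 1) ^ s) * (⨅ i ∈ {i | n i ≤ M}, ENNReal.ofReal (ρ₁ i)) +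
             ENNReal.ofReal (((M : ℝ) + 1) ^ s) * (⨅ i ∈ {i | n i ≤ M}, ENNReal.ofReal (ρ₂ i)) +
             ENNReal.ofReal (((M : ℝ) + 1) ^ s) * (⨅ i ∈ {i | n i ≤ M}, ENNReal.ofReal (ρ₃ i))) := by
          ring
      _ ≤ ENNReal.ofReal ((3 : ℝ) ^ s) * (apxNorm n ρ₁ s + apxNorm n ρ₂ s + apxNorm n ρ₃ s) := by
          gcongr
          · exact hA ρ₁
          · exact hA ρ₂
          · exact hA ρ₃
end

section
/- Let (a_ℓ)_{ℓ∈ℕ} be a sequence of strictly positive real numbers. Then the following two statements are equivalent: (a) the series ∑ a_n converges and there exists a constant C > 0 such that ∑_{n=ℓ}^∞ a_n ≤ C·a_ℓ for all ℓ ∈ ℕ; (b) for every s > 0 there exists a constant C > 0 such that ∑_{n=0}^{ℓ} a_n^{-1/s} ≤ C·a_ℓ^{-1/s} for all ℓ ∈ ℕ. -/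
/-- For a strictly positive real sequence `(a_ℓ)`, the uniform tail-summability condition
`∑_{n=ℓ}^∞ a_n ≤ C a_ℓ` is equivalent to the condition that for every `s > 0` there is
`C > 0` with `∑_{n=0}^{ℓ} a_n^{-1/s} ≤ C a_ℓ^{-1/s}` for all `ℓ`. -/
theorem stmt_10 (a : ℕ → ℝ) (ha : ∀ ℓ : ℕ, 0 < a ℓ) :
    (Summable a ∧ ∃ C : ℝ, 0 < C ∧ ∀ ℓ : ℕ, (∑' n : ℕ, a (ℓ + n)) ≤ C * a ℓ) ↔
    (∀ s : ℝ, 0 < s → ∃ C : ℝ, 0 < C ∧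
        ∀ ℓ : ℕ, (∑ n ∈ Finset.range (ℓ + 1), a n ^ (-(1 / s))) ≤ C * a ℓ ^ (-(1 / s))) := by
  constructor
  · rintro ⟨hsum, C, hC, hT⟩ s hs
    set T : ℕ → ℝ := fun ℓ => ∑' n : ℕ, a (ℓ + n) with hTdef
    have hTsummable : ∀ ℓ : ℕ, Summable (fun n => a (ℓ + n)) := by
      intro ℓ
      have := (summable_nat_add_iff ℓ).2 hsum
      simpa [add_comm] using this
    have h1 : ∀ ℓ, a ℓ ≤ T ℓ := by
      intro ℓ
      have := Summable.le_tsum (hTsummable ℓ) 0 (fun i _ => (ha _).le)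
      simpa using this
    have h2 : ∀ ℓ, T ℓ = a ℓ + T (ℓ + 1) := by
      intro ℓ
      have := Summable.tsum_eq_zero_add (hTsummable ℓ)
      simpa [hTdef, add_assoc, add_comm, add_left_comm] using this
    have hTpos : ∀ ℓ, 0 < T ℓ := fun ℓ => lt_of_lt_of_le (ha ℓ) (h1 ℓ)
    have hC1 : 1 < C := by
      by_contra hle
      push_neg at hle
      have h0 : T 0 ≤ C * a 0 := hT 0
      have : a 0 < T 0 := by
        have := h2 0
        nlinarith [hTpos 1]
      nlinarith [ha 0]
    set q : ℝ := 1 - 1 / C with hqdef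
    have hq0 : 0 < q := by
      have : 1 / C < 1 := by
        rw [div_lt_one hC]; exact hC1
      have h0 : q = 1 - 1 / C := hqdef
      rw [h0]; linarith
    have hq1 : q < 1 := by
      have : 0 < 1 / C := by positivity
      have h0 : q = 1 - 1 / C := hqdef
      rw [h0]; linarith
    have step : ∀ ℓ, T (ℓ + 1) ≤ q * T ℓ := by
      intro ℓ
      have h2ℓ := h2 ℓ
      have hTa : T ℓ ≤ C * a ℓ := hT ℓ
      have haℓ : T ℓ / C ≤ a ℓ := by
        rw [div_le_iff₀ hC]; linarith [hTa]
      have : T (ℓ + 1) = T ℓ - a ℓ := by linarith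
      rw [this, hqdef]
      have : T ℓ / C = (1 / C) * T ℓ := by ring
      nlinarith [haℓ]
    have decay : ∀ n k : ℕ, T (n + k) ≤ q ^ k * T n := by
      intro n k
      induction k with
      | zero => simp
      | succ k ih =>
        have := step (n + k)
        calc T (n + (k + 1)) = T (n + k + 1) := by ring_nf
          _ ≤ q * T (n + k) := step (n + k)
          _ ≤ q * (q ^ k * T n) := by nlinarith [hq0]
          _ = q ^ (k + 1) * T n := by ring
    have lower : ∀ n ℓ : ℕ, n ≤ ℓ → a ℓ * (C * q ^ (ℓ - n))⁻¹ ≤ a n := by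
      intro n ℓ hn
      have h3 : a ℓ ≤ C * q ^ (ℓ - n) * a n := by
        calc a ℓ ≤ T ℓ := h1 ℓ
          _ = T (n + (ℓ - n)) := by rw [Nat.add_sub_cancel' hn]
          _ ≤ q ^ (ℓ - n) * T n := decay n (ℓ - n)
          _ ≤ q ^ (ℓ - n) * (C * a n) := by
              have := hT n
              nlinarith [pow_pos hq0 (ℓ - n)]
          _ = C * q ^ (ℓ - n) * a n := by ring
      have hcq : 0 < C * q ^ (ℓ - n) := by positivity
      rw [mul_inv_le_iff₀ hcq]
      linarith [h3]
    -- now the rpow estimate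
    set e : ℝ := -(1 / s) with hedef
    have he : e ≤ 0 := by
      have : 0 < 1 / s := by positivity
      simp [hedef]; linarith
    set t : ℝ := q ^ ((1:ℝ) / s) with htdef
    have ht0 : 0 < t := Real.rpow_pos_of_pos hq0 _
    have ht1 : t < 1 := Real.rpow_lt_one hq0.le hq1 (by positivity)
    have key : ∀ n ℓ : ℕ, n ≤ ℓ → a n ^ e ≤ C ^ ((1:ℝ)/s) * t ^ (ℓ - n) * a ℓ ^ e := by
      intro n ℓ hn
      have h4 : a n ^ e ≤ (a ℓ * (C * q ^ (ℓ - n))⁻¹) ^ e := by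
        apply Real.rpow_le_rpow_of_nonpos _ (lower n ℓ hn) he
        have h5 := ha ℓ
        have h6 : (0:ℝ) < (C * q ^ (ℓ - n))⁻¹ :=
          inv_pos.2 (mul_pos hC (pow_pos hq0 _))
        exact mul_pos h5 h6
      refine h4.trans (le_of_eq ?_)
      have hcq : (0:ℝ) ≤ C * q ^ (ℓ - n) :=
        (mul_pos hC (pow_pos hq0 _)).le
      rw [Real.mul_rpow (ha ℓ).le (inv_nonneg.2 hcq), Real.inv_rpow hcq,
        ← Real.rpow_neg hcq, hedef, neg_neg, Real.mul_rpow hC.le (pow_pos hq0 _).le]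
      have : (q ^ (ℓ - n) : ℝ) ^ ((1:ℝ)/s) = t ^ (ℓ - n) := by
        rw [← Real.rpow_natCast q (ℓ - n), ← Real.rpow_mul hq0.le, mul_comm,
          Real.rpow_mul hq0.le, Real.rpow_natCast]
      rw [this]; ring
    refine ⟨C ^ ((1:ℝ)/s) * (1 - t)⁻¹,
      mul_pos (Real.rpow_pos_of_pos hC _) (inv_pos.2 (by linarith : (0:ℝ) < 1 - t)),
      fun ℓ => ?_⟩
    have hsumle : ∑ n ∈ Finset.range (ℓ + 1), a n ^ e ≤
        ∑ n ∈ Finset.range (ℓ + 1), C ^ ((1:ℝ)/s) * t ^ (ℓ - n) * a ℓ ^ e := by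
      apply Finset.sum_le_sum
      intro n hn
      exact key n ℓ (Nat.lt_succ_iff.1 (Finset.mem_range.1 hn))
    refine hsumle.trans ?_
    have hre : ∑ n ∈ Finset.range (ℓ + 1), C ^ ((1:ℝ)/s) * t ^ (ℓ - n) * a ℓ ^ e
        = C ^ ((1:ℝ)/s) * (∑ k ∈ Finset.range (ℓ + 1), t ^ k) * a ℓ ^ e := by
      rw [Finset.mul_sum, Finset.sum_mul]
      rw [← Finset.sum_range_reflect (fun k => C ^ ((1:ℝ)/s) * t ^ k * a ℓ ^ e) (ℓ + 1)]
      apply Finset.sum_congr rfl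
      intro n hn
      norm_num
    rw [hre]
    have hgeom : ∑ k ∈ Finset.range (ℓ + 1), t ^ k ≤ (1 - t)⁻¹ := by
      have := Summable.sum_le_tsum (Finset.range (ℓ + 1))
        (fun i _ => (pow_pos ht0 i).le) (summable_geometric_of_lt_one ht0.le ht1)
      rwa [tsum_geometric_of_lt_one ht0.le ht1] at this
    have hae : 0 < a ℓ ^ e := Real.rpow_pos_of_pos (ha ℓ) _
    have hCs : 0 < C ^ ((1:ℝ)/s) := Real.rpow_pos_of_pos hC _
    calc C ^ ((1:ℝ)/s) * (∑ k ∈ Finset.range (ℓ + 1), t ^ k) * a ℓ ^ e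
        ≤ C ^ ((1:ℝ)/s) * (1 - t)⁻¹ * a ℓ ^ e := by
          apply mul_le_mul_of_nonneg_right _ hae.le
          exact mul_le_mul_of_nonneg_left hgeom hCs.le
      _ = C ^ ((1:ℝ)/s) * (1 - t)⁻¹ * a ℓ ^ (-(1/s)) := rfl
  · intro h
    obtain ⟨C, hC, hb⟩ := h 1 one_pos
    have hb' : ∀ ℓ : ℕ, (∑ n ∈ Finset.range (ℓ + 1), (a n)⁻¹) ≤ C * (a ℓ)⁻¹ := by
      intro ℓ
      have := hb ℓ
      simpa [Real.rpow_neg_one] using this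
    set P : ℕ → ℝ := fun ℓ => ∑ n ∈ Finset.range (ℓ + 1), (a n)⁻¹ with hPdef
    have hPpos : ∀ ℓ, 0 < P ℓ := by
      intro ℓ
      apply Finset.sum_pos (fun i _ => inv_pos.2 (ha i))
      exact ⟨0, Finset.mem_range.2 (Nat.succ_pos ℓ)⟩
    have hPsucc : ∀ ℓ, P (ℓ + 1) = P ℓ + (a (ℓ + 1))⁻¹ := by
      intro ℓ
      simp [hPdef, Finset.sum_range_succ]
    have hPla : ∀ ℓ, (a ℓ)⁻¹ ≤ P ℓ := by
      intro ℓ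
      apply Finset.single_le_sum (fun i _ => (inv_pos.2 (ha i)).le)
      exact Finset.mem_range.2 (Nat.lt_succ_self ℓ)
    have hC1 : 1 < C := by
      have h1' := hb' 1
      have := hPsucc 0
      have hP0 : (a 0)⁻¹ ≤ P 0 := hPla 0
      by_contra hle
      push_neg at hle
      have : P 0 + (a 1)⁻¹ ≤ C * (a 1)⁻¹ := by rw [← hPsucc 0]; exact h1' 
      nlinarith [hPpos 0, inv_pos.2 (ha 1)]
    -- b_{ℓ+1} = (a(ℓ+1))⁻¹ ≥ P ℓ / (C-1)
    have hCm : 0 < C - 1 := by linarith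
    have hbstep : ∀ ℓ, P ℓ / (C - 1) ≤ (a (ℓ + 1))⁻¹ := by
      intro ℓ
      have := hb' (ℓ + 1)
      rw [div_le_iff₀ hCm]
      have hP1 : P (ℓ + 1) = P ℓ + (a (ℓ + 1))⁻¹ := hPsucc ℓ
      have : P ℓ + (a (ℓ + 1))⁻¹ ≤ C * (a (ℓ + 1))⁻¹ := by rw [← hP1]; exact hb' (ℓ+1)
      linarith
    set r : ℝ := C / (C - 1) with hrdef
    have hr1 : 1 < r := by
      rw [hrdef, lt_div_iff₀ hCm]; linarith
    have hr0 : 0 < r := by linarith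
    have hPstep : ∀ ℓ, r * P ℓ ≤ P (ℓ + 1) := by
      intro ℓ
      have h5 := hbstep ℓ
      have : P (ℓ + 1) = P ℓ + (a (ℓ + 1))⁻¹ := hPsucc ℓ
      rw [this, hrdef]
      have : C / (C - 1) * P ℓ = P ℓ + P ℓ / (C - 1) := by field_simp; ring
      rw [this]
      linarith
    have hPgrow : ∀ ℓ k : ℕ, r ^ k * P ℓ ≤ P (ℓ + k) := by
      intro ℓ k
      induction k with
      | zero => simp
      | succ k ih =>
        calc r ^ (k + 1) * P ℓ = r * (r ^ k * P ℓ) := by ring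
          _ ≤ r * P (ℓ + k) := by nlinarith [hr0]
          _ ≤ P (ℓ + k + 1) := hPstep (ℓ + k)
          _ = P (ℓ + (k + 1)) := by ring_nf
    set q : ℝ := r⁻¹ with hqdef
    have hq0 : 0 < q := inv_pos.2 hr0
    have hq1 : q < 1 := by
      rw [hqdef, inv_lt_one_iff₀]; right; exact hr1
    -- key : a (ℓ + 1 + k) ≤ (C - 1) * q ^ k * a ℓ
    have keyinv : ∀ ℓ k : ℕ, r ^ k * (a ℓ)⁻¹ / (C - 1) ≤ (a (ℓ + 1 + k))⁻¹ := by
      intro ℓ k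
      calc r ^ k * (a ℓ)⁻¹ / (C - 1) ≤ r ^ k * P ℓ / (C - 1) := by
            have h6 := hPla ℓ
            have hrk : (0:ℝ) < r ^ k := pow_pos hr0 k
            apply div_le_div_of_nonneg_right _ hCm.le
            nlinarith
          _ ≤ P (ℓ + k) / (C - 1) :=
            div_le_div_of_nonneg_right (hPgrow ℓ k) hCm.le
          _ ≤ (a (ℓ + k + 1))⁻¹ := hbstep (ℓ + k)
          _ = (a (ℓ + 1 + k))⁻¹ := by ring_nf
    have key : ∀ ℓ k : ℕ, a (ℓ + 1 + k) ≤ (C - 1) * q ^ k * a ℓ := by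
      intro ℓ k
      have h6 := keyinv ℓ k
      have hrk : (0:ℝ) < r ^ k := pow_pos hr0 k
      have haℓ := ha ℓ
      have haℓk := ha (ℓ + 1 + k)
      have hpos : 0 < r ^ k * (a ℓ)⁻¹ / (C - 1) := by positivity
      have h7 : a (ℓ + 1 + k) ≤ (r ^ k * (a ℓ)⁻¹ / (C - 1))⁻¹ := by
        rw [← inv_inv (a (ℓ + 1 + k))]
        exact inv_anti₀ hpos h6
      have h8 : (r ^ k * (a ℓ)⁻¹ / (C - 1))⁻¹ = (C - 1) * q ^ k * a ℓ := by
        rw [hqdef, inv_pow]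
        field_simp
      rw [h8] at h7
      exact h7
    have hsum1 : Summable (fun k => a (k + 1)) := by
      refine Summable.of_nonneg_of_le (fun k => (ha _).le) (fun k => ?_)
        ((summable_geometric_of_lt_one hq0.le hq1).mul_left ((C - 1) * a 0))
      calc a (k + 1) = a (0 + 1 + k) := by ring_nf
        _ ≤ (C - 1) * q ^ k * a 0 := key 0 k
        _ = (C - 1) * a 0 * q ^ k := by ring
    have hsuma : Summable a := (summable_nat_add_iff 1).1 hsum1
    refine ⟨hsuma, 1 + (C - 1) * (1 - q)⁻¹,
      add_pos one_pos (mul_pos hCm (inv_pos.2 (by linarith : (0:ℝ) < 1 - q))),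
      fun ℓ => ?_⟩
    have hsℓ : Summable (fun n => a (ℓ + n)) := by
      have := (summable_nat_add_iff ℓ).2 hsuma
      simpa [add_comm] using this
    have hz := Summable.tsum_eq_zero_add hsℓ
    have htail : ∑' n : ℕ, a (ℓ + (n + 1)) ≤ (C - 1) * (1 - q)⁻¹ * a ℓ := by
      have hle : ∀ k, a (ℓ + (k + 1)) ≤ (C - 1) * a ℓ * q ^ k := by
        intro k
        calc a (ℓ + (k + 1)) = a (ℓ + 1 + k) := by ring_nf
          _ ≤ (C - 1) * q ^ k * a ℓ := key ℓ k
          _ = (C - 1) * a ℓ * q ^ k := by ring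
      have hsg : Summable (fun k => (C - 1) * a ℓ * q ^ k) :=
        (summable_geometric_of_lt_one hq0.le hq1).mul_left _
      have hsf : Summable (fun k => a (ℓ + (k + 1))) := by
        have := (summable_nat_add_iff (ℓ + 1)).2 hsuma
        simpa [add_comm, add_assoc, add_left_comm] using this
      calc ∑' n : ℕ, a (ℓ + (n + 1)) ≤ ∑' k : ℕ, (C - 1) * a ℓ * q ^ k :=
            Summable.tsum_le_tsum hle hsf hsg
        _ = (C - 1) * a ℓ * (1 - q)⁻¹ := by
            rw [tsum_mul_left, tsum_geometric_of_lt_one hq0.le hq1]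
        _ = (C - 1) * (1 - q)⁻¹ * a ℓ := by ring
    rw [hz]
    simp only [add_zero]
    rw [add_mul, one_mul]
    linarith [htail]
end
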